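/- arXiv:2310.18520 — 3 statements merged into one kernel-verified Lean document; each statement's English description precedes it below -/
import Mathlib

section
/- Let $P \subset [0,1]$ be the symmetric Cantor-like set of measure $1/2$ constructed with level-$n$ intervals of length $r_n = (n+4)/(2^{n+1}(n+2))$ and gaps $u_{n,k}$ of length $u_n = 1/(2^n(n+2)(n+3))$, and let $v_{n,k}$ be the open interval concentric with $u_{n,k}$ of length $u_n/2$. Define $F: [0,1] \to \mathbb{R}$ by $F = 0$ on $P$, $F = (-1)^n/n$ on each $v_{n,k}$, and linear on the two components of $u_{n,k} \setminus \overline{v_{n,k}}$. Then $F$ is continuous on $[0,1]$. -/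
open MeasureTheory Set

/-- Length of a level-`n` interval: `r_n = (n+4)/(2^(n+1)(n+2))`. -/
noncomputable def rlen (n : ℕ) : ℝ := ((n : ℝ) + 4) / (2 ^ (n + 1) * ((n : ℝ) + 2))

/-- Length of a gap removed from a level-`n` interval: `u_n = 1/(2^n (n+2)(n+3))`. -/
noncomputable def ulen (n : ℕ) : ℝ := 1 / (2 ^ n * ((n : ℝ) + 2) * ((n : ℝ) + 3))

/-- Left endpoint of the level-`n` interval indexed by the binary word `s`. -/
noncomputable def leftEnd : (n : ℕ) → (Fin n → Bool) → ℝ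
  | 0, _ => 0
  | n + 1, s => leftEnd n (fun i => s i.castSucc) +
      (if s (Fin.last n) then rlen n - rlen (n + 1) else 0)

/-- The union of the `2^n` closed level-`n` intervals. -/
noncomputable def levelSet (n : ℕ) : Set ℝ :=
  ⋃ s : Fin n → Bool, Set.Icc (leftEnd n s) (leftEnd n s + rlen n)

/-- The Cantor-like set `P`. -/
noncomputable def cantorP : Set ℝ := ⋂ n, levelSet n

/-- Left endpoint of the gap removed from the level-`n` interval `s`. -/
noncomputable def gapL (n : ℕ) (s : Fin n → Bool) : ℝ :=
  leftEnd n s + (rlen n - ulen n) / 2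

/-- Right endpoint of the gap removed from the level-`n` interval `s`. -/
noncomputable def gapR (n : ℕ) (s : Fin n → Bool) : ℝ :=
  leftEnd n s + (rlen n + ulen n) / 2

/-- Left endpoint of the middle (plateau) part `v_{n,s}` of the gap. -/
noncomputable def vL (n : ℕ) (s : Fin n → Bool) : ℝ := gapL n s + ulen n / 4

/-- Right endpoint of the middle (plateau) part `v_{n,s}` of the gap. -/
noncomputable def vR (n : ℕ) (s : Fin n → Bool) : ℝ := gapR n s - ulen n / 4

/-- The plateau value `(-1)^n/n` on generation-`n` gaps (value `0` for `n = 0`). -/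
noncomputable def pval (n : ℕ) : ℝ := if n = 0 then 0 else (-1) ^ n / (n : ℝ)

lemma rlen_pos (n : ℕ) : 0 < rlen n := by unfold rlen; positivity

lemma ulen_pos (n : ℕ) : 0 < ulen n := by unfold ulen; positivity

lemma key_id (n : ℕ) : rlen n = 2 * rlen (n + 1) + ulen n := by
  unfold rlen ulen
  have h1 : ((n : ℝ) + 2) ≠ 0 := by positivity
  have h2 : ((n : ℝ) + 3) ≠ 0 := by positivity
  have h3 : (2 : ℝ) ^ (n + 1) ≠ 0 := by positivity
  have h4 : (2 : ℝ) ^ (n + 2) ≠ 0 := by positivity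
  have h5 : (2 : ℝ) ^ n ≠ 0 := by positivity
  push_cast
  rw [pow_succ, pow_succ]
  field_simp
  ring_nf

lemma ulen_anti {m n : ℕ} (h : m ≤ n) : ulen n ≤ ulen m := by
  unfold ulen
  have h1 : (0:ℝ) < 2 ^ m * ((m:ℝ) + 2) * ((m:ℝ) + 3) := by positivity
  apply one_div_le_one_div_of_le h1
  have hc : (m:ℝ) ≤ (n:ℝ) := by exact_mod_cast h
  have hp : (2:ℝ) ^ m ≤ 2 ^ n := by
    apply pow_le_pow_right₀ one_le_two h
  gcongr <;> linarith

lemma abs_pval_le_one (n : ℕ) : |pval n| ≤ 1 := by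
  unfold pval
  split
  · simp
  · rename_i h
    rw [abs_div, abs_pow, abs_neg, abs_one, one_pow, abs_of_nonneg (by positivity : (0:ℝ) ≤ n)]
    rw [div_le_one (by exact_mod_cast Nat.pos_of_ne_zero h)]
    exact_mod_cast Nat.one_le_iff_ne_zero.mpr h

lemma abs_pval_le {N n : ℕ} (hN : 0 < N) (h : N ≤ n) : |pval n| ≤ 1 / N := by
  have hn : n ≠ 0 := by omega
  unfold pval
  rw [if_neg hn, abs_div, abs_pow, abs_neg, abs_one, one_pow,
    abs_of_nonneg (by positivity : (0:ℝ) ≤ n)]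
  gcongr

lemma leftEnd_succ (n : ℕ) (t : Fin (n+1) → Bool) :
    leftEnd (n + 1) t = leftEnd n (Fin.init t) +
      (if t (Fin.last n) then rlen n - rlen (n + 1) else 0) := rfl

lemma leftEnd_snoc_false (n : ℕ) (s : Fin n → Bool) :
    leftEnd (n + 1) (Fin.snoc s false) = leftEnd n s := by
  rw [leftEnd_succ, Fin.snoc_last, Fin.init_snoc]
  simp

lemma leftEnd_snoc_true (n : ℕ) (s : Fin n → Bool) :
    leftEnd (n + 1) (Fin.snoc s true) = leftEnd n s + (rlen n - rlen (n + 1)) := by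
  rw [leftEnd_succ, Fin.snoc_last, Fin.init_snoc]
  simp

lemma disjoint_Icc_of_lt {a b c d : ℝ} (h : b < c) : Disjoint (Icc a b) (Icc c d) := by
  rw [Set.disjoint_left]
  rintro x ⟨_, hxb⟩ ⟨hcx, _⟩
  linarith

lemma child_subset (n : ℕ) (t : Fin (n+1) → Bool) :
    Icc (leftEnd (n+1) t) (leftEnd (n+1) t + rlen (n+1)) ⊆
      Icc (leftEnd n (Fin.init t)) (leftEnd n (Fin.init t) + rlen n) := by
  have hk := key_id n
  have hu := ulen_pos n
  have hr := rlen_pos (n+1)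
  rw [leftEnd_succ]
  apply Icc_subset_Icc <;> split <;> linarith

lemma snoc_ext {n : ℕ} {s t : Fin (n+1) → Bool}
    (h1 : Fin.init s = Fin.init t) (h2 : s (Fin.last n) = t (Fin.last n)) :
    s = t := by
  funext i
  refine Fin.lastCases h2 (fun j => congrFun h1 j) i

lemma lvl_disjoint : ∀ (n : ℕ) (s t : Fin n → Bool), s ≠ t →
    Disjoint (Icc (leftEnd n s) (leftEnd n s + rlen n))
      (Icc (leftEnd n t) (leftEnd n t + rlen n)) := by
  intro n
  induction n with
  | zero => intro s t h; exact absurd (Subsingleton.elim s t) h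
  | succ n ih =>
    intro s t hst
    by_cases hin : Fin.init s = Fin.init t
    · have hlast : s (Fin.last n) ≠ t (Fin.last n) := fun h => hst (snoc_ext hin h)
      have hk := key_id n
      have hu := ulen_pos n
      rw [leftEnd_succ n s, leftEnd_succ n t, hin]
      cases hb : s (Fin.last n) <;> cases hc : t (Fin.last n) <;>
          rw [hb] at hlast <;> rw [hc] at hlast <;> simp -failIfUnchanged only [if_true, if_false] at *
      · exact absurd rfl hlast
      · apply disjoint_Icc_of_lt; simp only [Bool.false_eq_true, if_false, if_true]; linarith
      · apply Disjoint.symm; apply disjoint_Icc_of_lt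
        simp only [Bool.false_eq_true, if_false, if_true]; linarith
      · exact absurd rfl hlast
    · exact Disjoint.mono (child_subset n s) (child_subset n t) (ih _ _ hin)

lemma gapL_eq (n : ℕ) (s : Fin n → Bool) : gapL n s = leftEnd n s + rlen (n+1) := by
  have := key_id n; unfold gapL; linarith

lemma gapR_eq (n : ℕ) (s : Fin n → Bool) : gapR n s = leftEnd n s + rlen n - rlen (n+1) := by
  have := key_id n; unfold gapR; linarith

lemma P_side {x : ℝ} (hx : x ∈ cantorP) (n : ℕ) (s : Fin n → Bool) :
    x ≤ gapL n s ∨ gapR n s ≤ x := by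
  have hx1 : x ∈ levelSet (n+1) := mem_iInter.mp hx (n+1)
  obtain ⟨t, hxt⟩ := mem_iUnion.mp hx1
  rw [leftEnd_succ] at hxt
  have hk := key_id n
  have hu := ulen_pos n
  have hr := rlen_pos (n+1)
  by_cases hin : Fin.init t = s
  · rw [hin] at hxt
    cases hb : t (Fin.last n) <;> rw [hb] at hxt <;>
      simp only [Bool.false_eq_true, if_false, if_true, Set.mem_Icc] at hxt
    · left; rw [gapL_eq]; linarith [hxt.2]
    · right; rw [gapR_eq]; linarith [hxt.1]
  · have hdisj := lvl_disjoint n (Fin.init t) s hin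
    have hxmem : x ∈ Icc (leftEnd n (Fin.init t)) (leftEnd n (Fin.init t) + rlen n) := by
      rw [Set.mem_Icc] at hxt ⊢
      constructor <;> split at hxt <;> [linarith [hxt.1]; linarith [hxt.1];
        linarith [hxt.2]; linarith [hxt.2]]
    have hxnot : x ∉ Icc (leftEnd n s) (leftEnd n s + rlen n) :=
      Set.disjoint_left.mp hdisj hxmem
    rw [Set.mem_Icc, not_and_or, not_le, not_le] at hxnot
    rcases hxnot with h | h
    · left; unfold gapL; linarith
    · right; unfold gapR; linarith

lemma exists_gap {x : ℝ} (hx : x ∈ Icc (0:ℝ) 1) (hxP : x ∉ cantorP) :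
    ∃ (n : ℕ) (s : Fin n → Bool), x ∈ Ioo (gapL n s) (gapR n s) := by
  classical
  have h0 : x ∈ levelSet 0 := by
    refine mem_iUnion.mpr ⟨fun i => i.elim0, ?_⟩
    have h1 : leftEnd 0 (fun i : Fin 0 => i.elim0) = 0 := rfl
    have h2 : rlen 0 = 1 := by unfold rlen; norm_num
    rw [h1, h2]; simpa using hx
  have hex : ∃ m, x ∉ levelSet m := by
    by_contra h
    push_neg at h
    exact hxP (mem_iInter.mpr h)
  have hm0 : Nat.find hex ≠ 0 := fun h => (h ▸ Nat.find_spec hex) h0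
  obtain ⟨n, hn⟩ : ∃ n, Nat.find hex = n + 1 := ⟨Nat.find hex - 1, by omega⟩
  have hmem : x ∉ levelSet (n+1) := by rw [← hn]; exact Nat.find_spec hex
  have hxn : x ∈ levelSet n :=
    not_not.mp (Nat.find_min hex (by omega))
  obtain ⟨s, hxs⟩ := mem_iUnion.mp hxn
  rw [Set.mem_Icc] at hxs
  refine ⟨n, s, ?_⟩
  have hk := key_id n
  have hu := ulen_pos n
  have hf : x ∉ Icc (leftEnd (n+1) (Fin.snoc s false)) (leftEnd (n+1) (Fin.snoc s false) + rlen (n+1)) :=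
    fun h => hmem (mem_iUnion.mpr ⟨_, h⟩)
  have hT : x ∉ Icc (leftEnd (n+1) (Fin.snoc s true)) (leftEnd (n+1) (Fin.snoc s true) + rlen (n+1)) :=
    fun h => hmem (mem_iUnion.mpr ⟨_, h⟩)
  rw [leftEnd_snoc_false, Set.mem_Icc, not_and_or, not_le, not_le] at hf
  rw [leftEnd_snoc_true, Set.mem_Icc, not_and_or, not_le, not_le] at hT
  constructor
  · rw [gapL_eq]
    rcases hf with h | h
    · linarith [hxs.1]
    · linarith
  · rw [gapR_eq]
    rcases hT with h | h
    · linarith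
    · linarith [hxs.2]

section FF
variable {F : ℝ → ℝ}
    (hplateau : ∀ (n : ℕ) (s : Fin n → Bool),
      ∀ x ∈ Set.Icc (vL n s) (vR n s), F x = pval n)
    (hlinL : ∀ (n : ℕ) (s : Fin n → Bool),
      ∀ x ∈ Set.Icc (gapL n s) (vL n s),
        F x = pval n * ((x - gapL n s) / (vL n s - gapL n s)))
    (hlinR : ∀ (n : ℕ) (s : Fin n → Bool),
      ∀ x ∈ Set.Icc (vR n s) (gapR n s),
        F x = pval n * ((gapR n s - x) / (gapR n s - vR n s)))

include hplateau hlinL hlinR in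
lemma F_formula (n : ℕ) (s : Fin n → Bool) (y : ℝ)
    (hy : y ∈ Icc (gapL n s) (gapR n s)) :
    F y = pval n * min 1 (min ((y - gapL n s) / (ulen n / 4)) ((gapR n s - y) / (ulen n / 4))) := by
  have hu := ulen_pos n
  have hq : (0:ℝ) < ulen n / 4 := by linarith
  have hvL : vL n s = gapL n s + ulen n / 4 := rfl
  have hvR : vR n s = gapR n s - ulen n / 4 := rfl
  have hlen : gapR n s - gapL n s = ulen n := by unfold gapR gapL; ring
  rw [Set.mem_Icc] at hy
  rcases le_or_gt y (vL n s) with h1 | h1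
  · rw [hlinL n s y ⟨hy.1, h1⟩]
    have e1 : vL n s - gapL n s = ulen n / 4 := by rw [hvL]; ring
    rw [e1]
    congr 1
    rw [hvL] at h1
    have hAB : (y - gapL n s) / (ulen n / 4) ≤ (gapR n s - y) / (ulen n / 4) := by
      rw [div_le_div_iff_of_pos_right hq]; linarith
    have hA1 : (y - gapL n s) / (ulen n / 4) ≤ 1 := by
      rw [div_le_one hq]; linarith
    rw [min_eq_left hAB, min_eq_right hA1]
  · rcases le_or_gt y (vR n s) with h2 | h2
    · rw [hplateau n s y ⟨h1.le, h2⟩]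
      rw [hvL] at h1; rw [hvR] at h2
      have hA : 1 ≤ (y - gapL n s) / (ulen n / 4) := by
        rw [le_div_iff₀ hq]; linarith
      have hB : 1 ≤ (gapR n s - y) / (ulen n / 4) := by
        rw [le_div_iff₀ hq]; linarith
      rw [min_eq_left (le_min hA hB), mul_one]
    · rw [hlinR n s y ⟨h2.le, hy.2⟩]
      have e2 : gapR n s - vR n s = ulen n / 4 := by rw [hvR]; ring
      rw [e2]
      congr 1
      rw [hvR] at h2
      have hBA : (gapR n s - y) / (ulen n / 4) ≤ (y - gapL n s) / (ulen n / 4) := by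
        rw [div_le_div_iff_of_pos_right hq]; linarith
      have hB1 : (gapR n s - y) / (ulen n / 4) ≤ 1 := by
        rw [div_le_one hq]; linarith
      rw [min_eq_right hBA, min_eq_right hB1]
end FF

theorem cantor_function_continuous (F : ℝ → ℝ)
    (hP : ∀ x ∈ cantorP, F x = 0)
    (hplateau : ∀ (n : ℕ) (s : Fin n → Bool),
      ∀ x ∈ Set.Icc (vL n s) (vR n s), F x = pval n)
    (hlinL : ∀ (n : ℕ) (s : Fin n → Bool),
      ∀ x ∈ Set.Icc (gapL n s) (vL n s),
        F x = pval n * ((x - gapL n s) / (vL n s - gapL n s)))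
    (hlinR : ∀ (n : ℕ) (s : Fin n → Bool),
      ∀ x ∈ Set.Icc (vR n s) (gapR n s),
        F x = pval n * ((gapR n s - x) / (gapR n s - vR n s))) :
    ContinuousOn F (Set.Icc 0 1) := by
  intro x hx
  by_cases hxP : x ∈ cantorP
  · rw [Metric.continuousWithinAt_iff]
    intro ε hε
    obtain ⟨N, hN⟩ := exists_nat_one_div_lt hε
    have huN : (0:ℝ) < ulen (N+1) := ulen_pos (N+1)
    refine ⟨ulen (N+1) / 4 * ε, by positivity, ?_⟩
    intro y hy hdist
    rw [Real.dist_eq, hP x hxP, sub_zero]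
    rw [Real.dist_eq] at hdist
    by_cases hyP : y ∈ cantorP
    · rw [hP y hyP]; simpa using hε
    · obtain ⟨n, s, hygap⟩ := exists_gap hy hyP
      have hyIcc : y ∈ Icc (gapL n s) (gapR n s) := Ioo_subset_Icc_self hygap
      have hF := F_formula hplateau hlinL hlinR n s y hyIcc
      have hu := ulen_pos n
      have hq : (0:ℝ) < ulen n / 4 := by linarith
      rw [Set.mem_Icc] at hyIcc
      have hA0 : 0 ≤ (y - gapL n s) / (ulen n / 4) :=
        div_nonneg (by linarith [hyIcc.1]) hq.le
      have hB0 : 0 ≤ (gapR n s - y) / (ulen n / 4) :=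
        div_nonneg (by linarith [hyIcc.2]) hq.le
      have hm0 : 0 ≤ min 1 (min ((y - gapL n s) / (ulen n / 4)) ((gapR n s - y) / (ulen n / 4))) :=
        le_min zero_le_one (le_min hA0 hB0)
      have habs : |F y| = |pval n| *
          min 1 (min ((y - gapL n s) / (ulen n / 4)) ((gapR n s - y) / (ulen n / 4))) := by
        rw [hF, abs_mul, abs_of_nonneg hm0]
      rcases le_or_gt (N+1) n with hn | hn
      · have h1 := abs_pval_le (Nat.succ_pos N) hn
        push_cast at h1
        have hmin1 : min 1 (min ((y - gapL n s) / (ulen n / 4)) ((gapR n s - y) / (ulen n / 4))) ≤ 1 :=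
          min_le_left _ _
        calc |F y| ≤ |pval n| * 1 := by rw [habs]; exact mul_le_mul_of_nonneg_left hmin1 (abs_nonneg _)
          _ = |pval n| := mul_one _
          _ ≤ 1/((N:ℝ)+1) := h1
          _ < ε := hN
      · have hside := P_side hxP n s
        have hun : ulen (N+1) ≤ ulen n := ulen_anti (by omega)
        have key : |F y| ≤ |y - x| / (ulen n / 4) := by
          rw [habs]
          rcases hside with h | h
          · have hxy : x ≤ y := le_trans h hygap.1.le
            rw [abs_of_nonneg (sub_nonneg.mpr hxy)]
            have hle : min 1 (min ((y - gapL n s) / (ulen n / 4)) ((gapR n s - y) / (ulen n / 4))) ≤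
                (y - x) / (ulen n / 4) := by
              refine le_trans (le_trans (min_le_right _ _) (min_le_left _ _)) ?_
              rw [div_le_div_iff_of_pos_right hq]; linarith
            calc |pval n| * _ ≤ 1 * ((y - x) / (ulen n / 4)) :=
                mul_le_mul (abs_pval_le_one n) hle hm0 zero_le_one
              _ = (y - x) / (ulen n / 4) := one_mul _
          · have hxy : y ≤ x := le_trans hygap.2.le h
            rw [abs_sub_comm, abs_of_nonneg (sub_nonneg.mpr hxy)]
            have hle : min 1 (min ((y - gapL n s) / (ulen n / 4)) ((gapR n s - y) / (ulen n / 4))) ≤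
                (x - y) / (ulen n / 4) := by
              refine le_trans (le_trans (min_le_right _ _) (min_le_right _ _)) ?_
              rw [div_le_div_iff_of_pos_right hq]; linarith
            calc |pval n| * _ ≤ 1 * ((x - y) / (ulen n / 4)) :=
                mul_le_mul (abs_pval_le_one n) hle hm0 zero_le_one
              _ = (x - y) / (ulen n / 4) := one_mul _
        calc |F y| ≤ |y - x| / (ulen n / 4) := key
          _ < (ulen (N+1) / 4 * ε) / (ulen n / 4) := by
              rw [div_lt_div_iff_of_pos_right hq]; exact hdist
          _ ≤ ε := by rw [div_le_iff₀ hq]; nlinarith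
  · obtain ⟨n, s, hxgap⟩ := exists_gap hx hxP
    have hcont : Continuous (fun y => pval n *
        min 1 (min ((y - gapL n s) / (ulen n / 4)) ((gapR n s - y) / (ulen n / 4)))) := by
      apply continuous_const.mul
      apply continuous_const.min
      exact Continuous.min ((continuous_id.sub continuous_const).div_const _)
        ((continuous_const.sub continuous_id).div_const _)
    apply ContinuousAt.continuousWithinAt
    apply ContinuousAt.congr hcont.continuousAt
    filter_upwards [Ioo_mem_nhds hxgap.1 hxgap.2] with y hy
    exact (F_formula hplateau hlinL hlinR n s y (Ioo_subset_Icc_self hy)).symm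
end

section
/- There exists a continuous function $F: [0,1] \to \mathbb{R}$ which is an $ACG$-function but which, for every $1 \le r < \infty$, fails to be $L^r$-differentiable on a set of positive Lebesgue measure. -/
open MeasureTheory Filter Set
open scoped ENNReal

/-- `α` is an `L^r`-derivative of `F` at `x`. -/
def HasLrDerivAt (r : ℝ) (F : ℝ → ℝ) (x α : ℝ) : Prop :=
  Tendsto (fun h : ℝ =>
      ((1 / h) * ∫ t in (-h)..h, |F (x + t) - F x - α * t| ^ r) ^ (1 / r) / h)
    (nhdsWithin 0 (Set.Ioi 0)) (nhds 0)

/-- Classical Vitali absolute continuity of `F` on `E`. -/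
def ACon (F : ℝ → ℝ) (E : Set ℝ) : Prop :=
  ∀ ε > (0 : ℝ), ∃ η > (0 : ℝ), ∀ (n : ℕ) (c d : Fin n → ℝ),
    (∀ i, c i < d i) → (∀ i, c i ∈ E ∧ d i ∈ E) →
    (∀ i j, i ≠ j → d i ≤ c j ∨ d j ≤ c i) →
    (∑ i, (d i - c i)) < η →
    (∑ i, |F (d i) - F (c i)|) < ε

/-- `F` is an `ACG`-function on `[0,1]`. -/
def ACG (F : ℝ → ℝ) : Prop :=
  ∃ E : ℕ → Set ℝ, (Set.Icc (0 : ℝ) 1 = ⋃ n, E n) ∧ ∀ n, ACon F (E n)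

noncomputable section SpikeConstr

def Ht (n : ℕ) : ℝ := ((2:ℝ)^n)⁻¹
def sl (n : ℕ) : ℝ := (2:ℝ)^(2*n+6)
def rad (n : ℕ) : ℝ := ((2:ℝ)^(3*n+6))⁻¹
def mid (n k : ℕ) : ℝ := k / (2:ℝ)^(2*n) + rad n
def T (n k : ℕ) (x : ℝ) : ℝ := max (Ht n - sl n * |x - mid n k|) 0
def Spike (n k : ℕ) : Set ℝ := Set.Ioo ((k:ℝ) / 2^(2*n)) ((k:ℝ) / 2^(2*n) + 2 * rad n)

lemma two_pow_inv_le {a b : ℕ} (h : a ≤ b) : ((2:ℝ)^b)⁻¹ ≤ ((2:ℝ)^a)⁻¹ := by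
  gcongr <;> norm_num

lemma Ht_pos (n : ℕ) : 0 < Ht n := by rw [Ht]; positivity
lemma sl_pos (n : ℕ) : 0 < sl n := by rw [sl]; positivity
lemma rad_pos (n : ℕ) : 0 < rad n := by rw [rad]; positivity
lemma Ht_le_one (n : ℕ) : Ht n ≤ 1 := by
  rw [Ht, inv_le_one_iff₀]; right; exact one_le_pow₀ (by norm_num)
lemma sl_mul_rad (n : ℕ) : sl n * rad n = Ht n := by
  rw [sl, rad, Ht, show 3*n+6 = (2*n+6)+n from by ring, pow_add (2:ℝ) (2*n+6) n, mul_inv, ← mul_assoc,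
    mul_inv_cancel₀ (by positivity), one_mul]
lemma two_rad (n : ℕ) : 2 * rad n = ((2:ℝ)^(3*n+5))⁻¹ := by
  rw [rad, show 3*n+6 = (3*n+5)+1 from by ring, pow_succ, mul_inv]
  field_simp
lemma rad_le (n : ℕ) : 2 * rad n ≤ ((2:ℝ)^(2*n))⁻¹ := by
  rw [two_rad]; exact two_pow_inv_le (by omega)

lemma T_nonneg (n k : ℕ) (x : ℝ) : 0 ≤ T n k x := le_max_right _ _
lemma T_le (n k : ℕ) (x : ℝ) : T n k x ≤ Ht n := by
  apply max_le _ (le_of_lt (Ht_pos n))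
  nlinarith [abs_nonneg (x - mid n k), sl_pos n]

lemma T_mem_spike {n k : ℕ} {x : ℝ} (h : T n k x ≠ 0) : x ∈ Spike n k := by
  have h1 : 0 < Ht n - sl n * |x - mid n k| := by
    rcases lt_or_ge 0 (Ht n - sl n * |x - mid n k|) with h'|h'
    · exact h'
    · exact absurd (max_eq_right h') h
  have h2 : |x - mid n k| < rad n := by
    have := sl_mul_rad n
    nlinarith [sl_pos n, rad_pos n]
  rw [abs_lt] at h2
  constructor
  · have : (k:ℝ)/2^(2*n) = mid n k - rad n := by rw [mid]; ring
    rw [this]; linarith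
  · have : (k:ℝ)/2^(2*n) + 2*rad n = mid n k + rad n := by rw [mid]; ring
    rw [this]; linarith

lemma T_lb {n k : ℕ} {y : ℝ} (h : |y - mid n k| ≤ rad n / 2) : Ht n / 2 ≤ T n k y := by
  have := sl_mul_rad n
  have h2 : sl n * |y - mid n k| ≤ Ht n / 2 := by
    nlinarith [sl_pos n]
  exact le_trans (by linarith) (le_max_left _ _)

lemma T_lip (n k : ℕ) (x y : ℝ) : |T n k x - T n k y| ≤ sl n * |x - y| := by
  refine le_trans (abs_max_sub_max_le_abs _ _ _) ?_
  have h0 : Ht n - sl n * |x - mid n k| - (Ht n - sl n * |y - mid n k|)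
      = sl n * (|y - mid n k| - |x - mid n k|) := by ring
  rw [h0, abs_mul, abs_of_pos (sl_pos n)]
  have h1 := abs_abs_sub_abs_le_abs_sub (y - mid n k) (x - mid n k)
  have h2 : |y - mid n k - (x - mid n k)| = |x - y| := by
    rw [show y - mid n k - (x - mid n k) = -(x - y) from by ring, abs_neg]
  rw [h2] at h1
  exact mul_le_mul_of_nonneg_left h1 (le_of_lt (sl_pos n))

lemma T_continuous (n k : ℕ) : Continuous (T n k) := by
  apply Continuous.max _ continuous_const
  fun_prop

lemma spike_unique_aux {n k k' : ℕ} {x : ℝ} (hlt : k < k') (h : x ∈ Spike n k) :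
    x ∉ Spike n k' := by
  intro h'
  have hq : (0:ℝ) < 2^(2*n) := by positivity
  have f1 : x < (k:ℝ)/2^(2*n) + 2*rad n := h.2
  have f2 : (k':ℝ)/2^(2*n) < x := h'.1
  have f3 : ((k:ℝ)+1) ≤ (k':ℝ) := by exact_mod_cast hlt
  have f4 : ((k:ℝ)+1)/2^(2*n) ≤ (k':ℝ)/2^(2*n) := by gcongr
  have f5 : (k:ℝ)/2^(2*n) + ((2:ℝ)^(2*n))⁻¹ = ((k:ℝ)+1)/2^(2*n) := by
    field_simp
  linarith [rad_le n]

lemma spike_unique {n k k' : ℕ} {x : ℝ} (h : x ∈ Spike n k) (h' : x ∈ Spike n k') : k = k' := by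
  rcases Nat.lt_trichotomy k k' with hlt | heq | hgt
  · exact absurd h' (spike_unique_aux hlt h)
  · exact heq
  · exact absurd h (spike_unique_aux hgt h')

def Flevel (n : ℕ) (x : ℝ) : ℝ := ∑ k ∈ Finset.range (2^(2*n) + 1), T n k x

def FF (x : ℝ) : ℝ := ⨆ n, Flevel n x

lemma Flevel_nonneg (n : ℕ) (x : ℝ) : 0 ≤ Flevel n x :=
  Finset.sum_nonneg fun k _ => T_nonneg n k x

lemma Flevel_eq_T (n : ℕ) (x : ℝ) : ∃ k, Flevel n x = T n k x := by
  by_cases hex : ∃ k ∈ Finset.range (2^(2*n) + 1), T n k x ≠ 0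
  · obtain ⟨k0, hk0, hne⟩ := hex
    refine ⟨k0, Finset.sum_eq_single_of_mem k0 hk0 fun b _ hb => ?_⟩
    by_contra hbne
    exact hb (spike_unique (T_mem_spike hbne) (T_mem_spike hne))
  · push_neg at hex
    refine ⟨0, ?_⟩
    rw [Flevel, Finset.sum_eq_zero hex, hex 0 (Finset.mem_range.mpr (by positivity))]

lemma Flevel_le (n : ℕ) (x : ℝ) : Flevel n x ≤ Ht n := by
  obtain ⟨k, hk⟩ := Flevel_eq_T n x
  rw [hk]; exact T_le n k x

lemma Flevel_ge (n : ℕ) {k : ℕ} (hk : k ∈ Finset.range (2^(2*n) + 1)) (x : ℝ) :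
    T n k x ≤ Flevel n x :=
  Finset.single_le_sum (fun i _ => T_nonneg n i x) hk

lemma Flevel_continuous (n : ℕ) : Continuous (Flevel n) := by
  apply continuous_finset_sum
  exact fun k _ => T_continuous n k

lemma bddF (x : ℝ) : BddAbove (Set.range fun n => Flevel n x) := by
  refine ⟨1, ?_⟩
  rintro y ⟨n, rfl⟩
  exact (Flevel_le n x).trans (Ht_le_one n)

lemma F_ge (n : ℕ) (x : ℝ) : Flevel n x ≤ FF x := le_ciSup (bddF x) n

lemma F_nonneg (x : ℝ) : 0 ≤ FF x := (Flevel_nonneg 0 x).trans (F_ge 0 x)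

lemma F_zero {x : ℝ} (h : ∀ n k, x ∉ Spike n k) : FF x = 0 := by
  have hT : ∀ n k, T n k x = 0 := by
    intro n k
    by_contra hne
    exact h n k (T_mem_spike hne)
  have hF : ∀ n, Flevel n x = 0 := fun n =>
    Finset.sum_eq_zero fun k _ => hT n k
  apply le_antisymm _ (F_nonneg x)
  exact ciSup_le fun n => le_of_eq (hF n)

/-- the sup defining `FF` is attained -/
lemma F_attained (x : ℝ) : ∃ n, FF x = Flevel n x := by
  rcases eq_or_lt_of_le (F_nonneg x) with h0 | hpos
  · refine ⟨0, le_antisymm ?_ ?_⟩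
    · rw [← h0]; exact Flevel_nonneg 0 x
    · exact F_ge 0 x
  · obtain ⟨N, hN⟩ := pow_unbounded_of_one_lt (FF x)⁻¹ (by norm_num : (1:ℝ) < 2)
    have hNlt : Ht N < FF x := by
      rw [Ht]
      rw [inv_lt_iff_one_lt_mul₀ (by positivity)] at hN ⊢
      · nlinarith [hpos]
    set M := (Finset.range (N+1)).sup' ⟨0, by simp⟩ (fun n => Flevel n x) with hM
    have hle : FF x ≤ max M (Ht N) := by
      apply ciSup_le
      intro n
      rcases le_or_gt n N with hn | hn
      · refine le_max_of_le_left ?_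
        rw [hM]
        exact Finset.le_sup' (fun n => Flevel n x) (Finset.mem_range.mpr (Nat.lt_succ_of_le hn))
      · exact le_max_of_le_right ((Flevel_le n x).trans (two_pow_inv_le hn.le))
    have hMF : FF x ≤ M := by
      rcases max_cases M (Ht N) with ⟨he, _⟩ | ⟨he, _⟩
      · rwa [he] at hle
      · rw [he] at hle; linarith
    obtain ⟨n0, _, hn0⟩ := Finset.exists_mem_eq_sup' (⟨0, by simp⟩ : (Finset.range (N+1)).Nonempty) (fun n => Flevel n x)
    exact ⟨n0, le_antisymm (hMF.trans_eq hn0) (F_ge n0 x)⟩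

/-- partial maxima of levels -/
def PM : ℕ → ℝ → ℝ
  | 0 => Flevel 0
  | (N+1) => fun x => max (PM N x) (Flevel (N+1) x)

lemma PM_continuous (N : ℕ) : Continuous (PM N) := by
  induction N with
  | zero => exact Flevel_continuous 0
  | succ N ih => exact ih.max (Flevel_continuous (N+1))

lemma PM_nonneg (N : ℕ) (x : ℝ) : 0 ≤ PM N x := by
  induction N with
  | zero => exact Flevel_nonneg 0 x
  | succ N ih => exact ih.trans (le_max_left _ _)

lemma Flevel_le_PM {n N : ℕ} (h : n ≤ N) (x : ℝ) : Flevel n x ≤ PM N x := by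
  induction N with
  | zero => rw [Nat.le_zero.mp h]; exact le_refl _
  | succ N ih =>
    rcases Nat.lt_succ_iff_lt_or_eq.mp (Nat.lt_succ_of_le h) with h' | h'
    · exact (ih (Nat.lt_succ_iff.mp h')).trans (le_max_left _ _)
    · rw [h']; exact le_max_right _ _

lemma PM_le_F (N : ℕ) (x : ℝ) : PM N x ≤ FF x := by
  induction N with
  | zero => exact F_ge 0 x
  | succ N ih => exact max_le ih (F_ge (N+1) x)

lemma F_le_PM_add (N : ℕ) (x : ℝ) : FF x ≤ PM N x + Ht N := by
  apply ciSup_le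
  intro n
  rcases le_or_gt n N with h | h
  · exact (Flevel_le_PM h x).trans (le_add_of_nonneg_right (Ht_pos N).le)
  · exact le_add_of_nonneg_of_le (PM_nonneg N x)
      ((Flevel_le n x).trans (two_pow_inv_le h.le))

lemma F_continuous : Continuous FF := by
  apply TendstoUniformly.continuous (F := PM) (p := atTop)
  · rw [Metric.tendstoUniformly_iff]
    intro ε hε
    obtain ⟨N0, hN0⟩ := pow_unbounded_of_one_lt ε⁻¹ (by norm_num : (1:ℝ) < 2)
    rw [eventually_atTop]
    refine ⟨N0, fun N hN x => ?_⟩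
    rw [Real.dist_eq, abs_of_nonneg (by linarith [PM_le_F N x])]
    have h1 : Ht N ≤ Ht N0 := two_pow_inv_le hN
    have h2 : Ht N0 < ε := by
      rw [Ht]
      rw [inv_lt_iff_one_lt_mul₀ (by positivity)] at hN0 ⊢
      nlinarith
    linarith [F_le_PM_add N x]
  · exact (Filter.Eventually.of_forall PM_continuous).frequently

lemma ACon_FF (n k : ℕ) : ACon FF {x ∈ Set.Icc (0:ℝ) 1 | FF x = T n k x} := by
  intro ε hε
  refine ⟨ε/(sl n + 1), by have := sl_pos n; positivity, ?_⟩
  intro N c d hcd hmem _ hsum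
  have key : ∀ i, |FF (d i) - FF (c i)| ≤ sl n * (d i - c i) := by
    intro i
    rw [(hmem i).1.2, (hmem i).2.2]
    calc |T n k (d i) - T n k (c i)| ≤ sl n * |d i - c i| := T_lip n k _ _
      _ = sl n * (d i - c i) := by rw [abs_of_pos (sub_pos.mpr (hcd i))]
  have hsl := sl_pos n
  calc ∑ i, |FF (d i) - FF (c i)| ≤ ∑ i, sl n * (d i - c i) :=
        Finset.sum_le_sum fun i _ => key i
    _ = sl n * ∑ i, (d i - c i) := by rw [Finset.mul_sum]
    _ < sl n * (ε/(sl n + 1)) := by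
        apply mul_lt_mul_of_pos_left _ hsl
        exact hsum
    _ ≤ ε := by
        rw [mul_div_assoc']
        rw [div_le_iff₀ (by positivity)]
        nlinarith
  -- note: case N = 0 gives empty sums; but then sum = 0 < ε anyway handled? (sum over Fin 0 is 0, and hsum gives 0 < η; fine, the calc still works since strict ineq on sums over empty: 0 ≤ 0... )

lemma ACG_FF : ACG FF := by
  refine ⟨fun m => {x ∈ Set.Icc (0:ℝ) 1 | FF x = T m.unpair.1 m.unpair.2 x}, ?_, ?_⟩
  · apply Set.Subset.antisymm
    · intro x hx
      obtain ⟨n, hn⟩ := F_attained x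
      obtain ⟨k, hk⟩ := Flevel_eq_T n x
      exact Set.mem_iUnion.mpr ⟨Nat.pair n k, ⟨hx, by simp only [Nat.unpair_pair]; rw [hn, hk]⟩⟩
    · intro x hx
      obtain ⟨m, hm⟩ := Set.mem_iUnion.mp hx
      exact hm.1
  · exact fun m => ACon_FF m.unpair.1 m.unpair.2

def UU : Set ℝ := ⋃ n, ⋃ k, Spike n k
def SS : Set ℝ := Set.Ico (0:ℝ) 1 \ UU

lemma SS_subset : SS ⊆ Set.Icc 0 1 := fun x hx => Set.Ico_subset_Icc_self hx.1

lemma SS_meas : MeasurableSet SS :=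
  measurableSet_Ico.diff (MeasurableSet.iUnion fun n => MeasurableSet.iUnion fun k =>
    measurableSet_Ioo)

lemma ofReal_two_pow_inv (m : ℕ) : ENNReal.ofReal (((2:ℝ)^m)⁻¹) = (2:ℝ≥0∞)⁻¹^m := by
  rw [ENNReal.ofReal_inv_of_pos (by positivity), ENNReal.ofReal_pow (by norm_num),
    ← ENNReal.inv_pow]
  norm_num

lemma hsubU : Set.Ico (0:ℝ) 1 ∩ UU ⊆ ⋃ n, ⋃ k ∈ Finset.range (2^(2*n)), Spike n k := by
  rintro x ⟨⟨hx0, hx1⟩, hU⟩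
  rw [UU] at hU
  obtain ⟨n, hn⟩ := Set.mem_iUnion.mp hU
  obtain ⟨k, hk⟩ := Set.mem_iUnion.mp hn
  refine Set.mem_iUnion.mpr ⟨n, Set.mem_iUnion₂.mpr ⟨k, ?_, hk⟩⟩
  rw [Finset.mem_range]
  have h1 : (k:ℝ)/2^(2*n) < 1 := lt_trans hk.1 hx1
  rw [div_lt_one (by positivity)] at h1
  exact_mod_cast h1

lemma vol_UU : volume (Set.Ico (0:ℝ) 1 ∩ UU) ≤ (2:ℝ≥0∞)⁻¹^4 := by
  refine le_trans (measure_mono hsubU) ?_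
  refine le_trans (measure_iUnion_le _) ?_
  have hn : ∀ n:ℕ, volume (⋃ k ∈ Finset.range (2^(2*n)), Spike n k) ≤ (2:ℝ≥0∞)⁻¹^(n+5) := by
    intro n
    refine le_trans (measure_biUnion_finset_le _ _) ?_
    have hvol : ∀ k ∈ Finset.range (2^(2*n)), volume (Spike n k) = (2:ℝ≥0∞)⁻¹^(3*n+5) := by
      intro k _
      rw [Spike, Real.volume_Ioo, show (k:ℝ)/2^(2*n) + 2*rad n - (k:ℝ)/2^(2*n) = 2*rad n from by ring,
        two_rad, ofReal_two_pow_inv]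
    rw [Finset.sum_congr rfl hvol, Finset.sum_const, Finset.card_range, nsmul_eq_mul]
    have hc : ((2^(2*n) : ℕ) : ℝ≥0∞) = 2^(2*n) := by push_cast; ring
    rw [hc, show 3*n+5 = 2*n + (n+5) from by ring, pow_add, ← mul_assoc, ← mul_pow,
      ENNReal.mul_inv_cancel (by norm_num) (by norm_num), one_pow, one_mul]
  refine le_trans (ENNReal.tsum_le_tsum hn) ?_
  have : ∑' n:ℕ, (2:ℝ≥0∞)⁻¹^(n+5) = (∑' n:ℕ, (2:ℝ≥0∞)⁻¹^n) * 2⁻¹^5 := by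
    rw [← ENNReal.tsum_mul_right]
    congr 1; funext n; rw [pow_add]
  rw [this, ENNReal.tsum_geometric]
  have h2 : ((1:ℝ≥0∞) - 2⁻¹)⁻¹ = 2 := by
    rw [ENNReal.one_sub_inv_two, inv_inv]
  rw [h2]
  rw [show (5:ℕ) = 1 + 4 from rfl, pow_add, ← mul_assoc, pow_one,
    ENNReal.mul_inv_cancel (by norm_num) (by norm_num), one_mul]

lemma SS_pos : 0 < volume SS := by
  rcases (zero_le : 0 ≤ volume SS).eq_or_lt with h0 | h
  · exfalso
    have hcover : Set.Ico (0:ℝ) 1 ⊆ (Set.Ico (0:ℝ) 1 ∩ UU) ∪ SS := by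
      intro x hx
      by_cases hU : x ∈ UU
      · exact Or.inl ⟨hx, hU⟩
      · exact Or.inr ⟨hx, hU⟩
    have hb := (measure_mono hcover).trans (measure_union_le (μ := volume) _ _)
    rw [Real.volume_Ico, ← h0, add_zero] at hb
    have := hb.trans vol_UU
    rw [show (1:ℝ)-0 = 1 from by norm_num, ENNReal.ofReal_one] at this
    have h4 : ((2:ℝ≥0∞)⁻¹)^4 < 1 := by
      apply pow_lt_one₀ zero_le _ (by norm_num)
      · exact ENNReal.inv_lt_one.mpr (by norm_num)
    exact absurd (this.trans_lt h4) (lt_irrefl _)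
  · exact h

set_option maxHeartbeats 1000000 in
lemma key_estimate (r α : ℝ) (hr : 1 ≤ r) {x : ℝ} (hx : x ∈ SS) {n : ℕ}
    (hα : |α| * Ht n ≤ 8⁻¹) :
    ((2:ℝ)^10)⁻¹ ≤ ((1 / (2 * ((2:ℝ)^(2*n))⁻¹)) *
        ∫ t in (-(2 * ((2:ℝ)^(2*n))⁻¹))..(2 * ((2:ℝ)^(2*n))⁻¹),
          |FF (x + t) - FF x - α * t| ^ r) ^ (1 / r) / (2 * ((2:ℝ)^(2*n))⁻¹) := by
  have hr0 : (0:ℝ) < r := lt_of_lt_of_le one_pos hr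
  have hrne : r ≠ 0 := ne_of_gt hr0
  obtain ⟨⟨hx0, hx1⟩, hxU⟩ := hx
  set u : ℝ := (2:ℝ)^n with hu
  have hu1 : 1 ≤ u := one_le_pow₀ (by norm_num)
  have hu0 : 0 < u := lt_of_lt_of_le one_pos hu1
  have hHtu : Ht n = u⁻¹ := by rw [Ht]
  set q : ℝ := (2:ℝ)^(2*n) with hqdef
  have hq0 : 0 < q := by positivity
  have hqu : q = u^2 := by
    rw [hqdef, hu, show 2*n = n*2 from mul_comm 2 n, pow_mul]
  set hh : ℝ := 2 * q⁻¹ with hhdef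
  have hh0 : 0 < hh := by positivity
  have hFx : FF x = 0 :=
    F_zero (fun m j hmem => hxU (Set.mem_iUnion.mpr ⟨m, Set.mem_iUnion.mpr ⟨j, hmem⟩⟩))
  set k : ℕ := ⌊q*x⌋₊ + 1 with hkdef
  have hqx0 : 0 ≤ q*x := mul_nonneg hq0.le hx0
  have hk1 : x < (k:ℝ)/q := by
    rw [lt_div_iff₀ hq0]
    have h1 := Nat.lt_floor_add_one (q*x)
    have h2 : ((k:ℕ):ℝ) = (⌊q*x⌋₊:ℝ) + 1 := by rw [hkdef]; push_cast; ring
    rw [h2, mul_comm]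
    exact h1
  have hk2 : (k:ℝ)/q ≤ x + q⁻¹ := by
    rw [div_le_iff₀ hq0]
    have h1 : (⌊q*x⌋₊:ℝ) ≤ q*x := Nat.floor_le hqx0
    have h2 : ((k:ℕ):ℝ) = (⌊q*x⌋₊:ℝ) + 1 := by rw [hkdef]; push_cast; ring
    have h3 : (x + q⁻¹)*q = x*q + 1 := by field_simp
    rw [h2, h3]
    nlinarith
  have hkrange : k ∈ Finset.range (2^(2*n)+1) := by
    rw [Finset.mem_range, hkdef]
    have hfl : ⌊q*x⌋₊ < 2^(2*n) := by
      rw [Nat.floor_lt hqx0]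
      have : ((2^(2*n):ℕ):ℝ) = q := by rw [hqdef]; push_cast; ring
      rw [this]
      nlinarith
    omega
  set c : ℝ := Ht n / 4 with hcdef
  have hHt0 := Ht_pos n
  have hc0 : 0 < c := by rw [hcdef]; linarith
  set Iset : Set ℝ := Set.Icc (mid n k - rad n/2 - x) (mid n k + rad n/2 - x) with hIdef
  clear_value u q hh k c
  have hrad := rad_pos n
  have hradle : 2 * rad n ≤ q⁻¹ := by rw [hqdef]; exact rad_le n
  have hmid : mid n k = (k:ℝ)/q + rad n := by rw [mid, hqdef]
  have htpos : ∀ t ∈ Iset, 0 < t ∧ t ≤ hh := by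
    rintro t ⟨ht1, ht2⟩
    constructor
    · have : 0 < mid n k - rad n/2 - x := by rw [hmid]; nlinarith
      linarith
    · have : mid n k + rad n/2 - x ≤ hh := by
        rw [hmid, hhdef]
        nlinarith
      linarith
  have hqinv : q⁻¹ = Ht n * Ht n := by
    rw [hqu, hHtu]
    field_simp
  have hFlb : ∀ t ∈ Iset, c ≤ |FF (x + t) - FF x - α * t| := by
    intro t ht
    obtain ⟨htp, hth⟩ := htpos t ht
    obtain ⟨ht1, ht2⟩ := ht
    have hTy : Ht n / 2 ≤ T n k (x+t) := by
      apply T_lb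
      rw [abs_le]
      constructor <;> linarith
    have hFy : Ht n / 2 ≤ FF (x+t) :=
      hTy.trans ((Flevel_ge n hkrange (x+t)).trans (F_ge n (x+t)))
    have hat : α * t ≤ Ht n / 4 := by
      have h1 : α*t ≤ |α| * |t| := le_trans (le_abs_self _) (le_of_eq (abs_mul α t))
      have h2 : |t| ≤ hh := by rw [abs_of_pos htp]; exact hth
      have h3 : |α| * |t| ≤ |α| * hh := mul_le_mul_of_nonneg_left h2 (abs_nonneg α)
      have h4 : |α| * hh = 2*(|α| * Ht n)*Ht n := by rw [hhdef, hqinv]; ring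
      have h5 : α*t ≤ 2*(|α| * Ht n)*Ht n := by
        rw [← h4]; exact h1.trans h3
      have h6 : 0 ≤ (8⁻¹ - |α| * Ht n) * Ht n := mul_nonneg (by linarith) hHt0.le
      nlinarith [h5, h6]
    have hcle : c ≤ FF (x+t) - FF x - α*t := by
      rw [hFx, hcdef]; linarith
    exact hcle.trans (le_abs_self _)
  set ψ : ℝ → ℝ := fun t => |FF (x + t) - FF x - α * t| ^ r with hψ
  have ψcont : Continuous ψ := by
    have h1 : Continuous fun t : ℝ => |FF (x+t) - FF x - α*t| := by
      apply Continuous.abs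
      exact ((F_continuous.comp (continuous_const.add continuous_id)).sub
        continuous_const).sub (continuous_const.mul continuous_id)
    rw [hψ]
    apply continuous_iff_continuousAt.mpr
    intro t
    exact (Real.continuousAt_rpow_const _ r (Or.inr hr0.le)).comp h1.continuousAt
  have ψ0 : ∀ t, 0 ≤ ψ t := fun t => Real.rpow_nonneg (abs_nonneg _) r
  have hIsub : Iset ⊆ Set.Ioc (-hh) hh := by
    intro t ht
    obtain ⟨htp, hth⟩ := htpos t ht
    exact ⟨by linarith, hth⟩
  have hIOC : IntegrableOn ψ (Set.Ioc (-hh) hh) := ψcont.integrableOn_Ioc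
  have hmono2 : ∫ t in Iset, ψ t ≤ ∫ t in Set.Ioc (-hh) hh, ψ t :=
    setIntegral_mono_set hIOC (Filter.Eventually.of_forall ψ0)
      (HasSubset.Subset.eventuallyLE hIsub)
  have hvolI : (volume Iset).toReal = rad n := by
    rw [hIdef, Real.volume_Icc,
      show mid n k + rad n/2 - x - (mid n k - rad n/2 - x) = rad n from by ring,
      ENNReal.toReal_ofReal hrad.le]
  have hconst : c ^ r * rad n ≤ ∫ t in Iset, ψ t := by
    have hlb : ∀ t ∈ Iset, c ^ r ≤ ψ t := fun t ht =>
      Real.rpow_le_rpow hc0.le (hFlb t ht) hr0.le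
    have h := setIntegral_ge_of_const_le_real measurableSet_Icc
      (measure_Icc_lt_top).ne hlb (hIOC.mono_set hIsub)
    rwa [measureReal_def, ← hIdef, hvolI] at h
  have hints : c ^ r * rad n ≤ ∫ t in (-hh)..hh, ψ t := by
    rw [intervalIntegral.integral_of_le (by linarith)]
    exact hconst.trans hmono2
  have hAB : (1/hh) * (c ^ r * rad n) ≤ (1/hh) * ∫ t in (-hh)..hh, ψ t :=
    mul_le_mul_of_nonneg_left hints (by positivity)
  set X : ℝ := (128*u)⁻¹ with hX
  clear_value X
  have hX0 : 0 < X := by rw [hX]; positivity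
  have hX1 : X ≤ 1 := by
    rw [hX, inv_le_one_iff₀]; right; nlinarith
  have hradu : rad n = (64*u^3)⁻¹ := by
    rw [rad, hu, show 3*n+6 = n*3 + 6 from by ring, pow_add, pow_mul]
    norm_num [mul_comm]
  have hB : (1/hh) * (c ^ r * rad n) = X * c ^ r := by
    rw [hhdef, hqu, hradu, hX]
    field_simp
    ring
  have hcr0 : 0 ≤ c ^ r := Real.rpow_nonneg hc0.le r
  have hstep : (X * c ^ r) ^ (1/r) = X ^ (1/r) * c := by
    rw [Real.mul_rpow hX0.le hcr0, ← Real.rpow_mul hc0.le,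
      mul_one_div_cancel hrne, Real.rpow_one]
  have hmono3 : (X * c ^ r) ^ (1/r) ≤ ((1/hh) * ∫ t in (-hh)..hh, ψ t) ^ (1/r) := by
    apply Real.rpow_le_rpow (by positivity) (hB ▸ hAB) (by positivity)
  have hfinal : X ^ (1/r) * c / hh ≤ ((1/hh) * ∫ t in (-hh)..hh, ψ t) ^ (1/r) / hh := by
    gcongr
    exact hstep ▸ hmono3
  have hXX : X ≤ X ^ (1/r) := by
    calc X = X ^ (1:ℝ) := (Real.rpow_one X).symm
      _ ≤ X ^ (1/r) := Real.rpow_le_rpow_of_exponent_ge hX0 hX1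
        (by rw [div_le_one hr0]; exact hr)
  have hch : c / hh = u / 8 := by
    rw [hcdef, hhdef, hqu, hHtu]
    field_simp
    ring
  calc ((2:ℝ)^10)⁻¹ = X * (u/8) := by
        rw [hX]
        field_simp
        ring
    _ ≤ X^(1/r) * (u/8) := mul_le_mul_of_nonneg_right hXX (by positivity)
    _ = X^(1/r) * c / hh := by rw [mul_div_assoc, hch]
    _ ≤ _ := hfinal

lemma not_lr : ∀ r : ℝ, 1 ≤ r → ∀ x ∈ SS, ¬ ∃ α : ℝ, HasLrDerivAt r FF x α := by
  intro r hr x hx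
  rintro ⟨α, hα⟩
  rw [HasLrDerivAt] at hα
  have hseq : Tendsto (fun n : ℕ => 2 * ((2:ℝ)^(2*n))⁻¹) atTop (nhdsWithin 0 (Set.Ioi 0)) := by
    rw [tendsto_nhdsWithin_iff]
    constructor
    · have h1 : Tendsto (fun n : ℕ => ((4:ℝ)⁻¹)^n) atTop (nhds 0) :=
        tendsto_pow_atTop_nhds_zero_of_lt_one (by norm_num) (by norm_num)
      have h2 : (fun n : ℕ => 2 * ((2:ℝ)^(2*n))⁻¹) = fun n : ℕ => 2 * ((4:ℝ)⁻¹)^n := by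
        funext n
        rw [pow_mul, ← inv_pow]
        norm_num
      rw [h2]
      simpa using h1.const_mul (2:ℝ)
    · exact Filter.Eventually.of_forall fun n => Set.mem_Ioi.mpr (by positivity)
  have hcomp := hα.comp hseq
  obtain ⟨N, hN⟩ := pow_unbounded_of_one_lt (8*|α|) (by norm_num : (1:ℝ) < 2)
  have hev : ∀ᶠ n:ℕ in atTop, ((2:ℝ)^10)⁻¹ ≤
      ((fun h : ℝ => ((1 / h) * ∫ t in (-h)..h, |FF (x + t) - FF x - α * t| ^ r) ^ (1 / r) / h)
        ∘ (fun n : ℕ => 2 * ((2:ℝ)^(2*n))⁻¹)) n := by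
    rw [eventually_atTop]
    refine ⟨N, fun n hn => ?_⟩
    have h1 : (2:ℝ)^N ≤ 2^n := pow_le_pow_right₀ (by norm_num) hn
    have h2 : 8*|α| ≤ (2:ℝ)^n := le_trans hN.le h1
    have h4 : (0:ℝ) < 2^n := by positivity
    have hsmall : |α| * Ht n ≤ 8⁻¹ := by
      rw [Ht]
      have hinv : ((2:ℝ)^n)⁻¹ * 2^n = 1 := inv_mul_cancel₀ h4.ne'
      have hinvpos : (0:ℝ) < ((2:ℝ)^n)⁻¹ := by positivity
      nlinarith [mul_le_mul_of_nonneg_left h2 hinvpos.le]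
    exact key_estimate r α hr hx hsmall
  have hcontra := ge_of_tendsto hcomp hev
  norm_num at hcontra

end SpikeConstr

/-- There exists a continuous `ACG`-function which, for every `r ≥ 1`, fails to
be `L^r`-differentiable on a set of positive measure. -/
theorem exists_continuous_ACG_not_lr_differentiable :
    ∃ F : ℝ → ℝ, ContinuousOn F (Set.Icc 0 1) ∧ ACG F ∧
      ∀ r : ℝ, 1 ≤ r → ∃ S : Set ℝ, S ⊆ Set.Icc 0 1 ∧ MeasurableSet S ∧
        0 < volume S ∧ ∀ x ∈ S, ¬ ∃ α : ℝ, HasLrDerivAt r F x α := by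
  exact ⟨FF, F_continuous.continuousOn, ACG_FF,
    fun r hr => ⟨SS, SS_subset, SS_meas, SS_pos, not_lr r hr⟩⟩
end

section
/- Let $W \subseteq [a,b]$, let $\overline{T} \supseteq W$ where $T \subseteq [a,b]$, suppose every point of $W$ is a two-sided limit point of $\overline{T}$, and suppose $F$ is continuous relative to a set $E \supseteq W \cup T$. If for some $\gamma, \eta > 0$ every $\gamma$-fine partition tagged in $T$ of total length $< \eta$ satisfies $\sum_i \left(\frac{1}{d_i-c_i}\int_{c_i}^{d_i}|F(y)-F(x_i)|^r dy\right)^{1/r} < 1$, then every $\gamma$-fine partition tagged in $W$ of total length $< \eta$ satisfies $\sum_i \left(\frac{1}{d_i-c_i}\int_{c_i}^{d_i}|F(y)-F(x_i)|^r dy\right)^{1/r} < 2$. -/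
open MeasureTheory Set

/-- A finite tagged partition in `[a,b]`. -/
def IsTaggedPart (n : ℕ) (c d x : Fin n → ℝ) (a b : ℝ) : Prop :=
  (∀ i, c i < d i) ∧ (∀ i, x i ∈ Set.Icc (c i) (d i)) ∧
  (∀ i, Set.Icc (c i) (d i) ⊆ Set.Icc a b) ∧
  (∀ i j, i ≠ j → d i ≤ c j ∨ d j ≤ c i)

/-- Minkowski-type inequality for the `L^r` mean on an interval, against a constant. -/
lemma mink {r : ℝ} (hr : 1 ≤ r) {c d : ℝ} (hcd : c < d) {f : ℝ → ℝ}
    (hf : MemLp f (ENNReal.ofReal r) (volume.restrict (Set.Ioc c d))) (k : ℝ) :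
    ((d - c)⁻¹ * ∫ y in c..d, |f y + k| ^ r) ^ (1 / r)
      ≤ ((d - c)⁻¹ * ∫ y in c..d, |f y| ^ r) ^ (1 / r) + |k| := by
  have hr0 : 0 < r := lt_of_lt_of_le one_pos hr
  set μ := volume.restrict (Set.Ioc c d) with hμ
  haveI : IsFiniteMeasure μ := ⟨by
    rw [hμ, Measure.restrict_apply_univ]; exact measure_Ioc_lt_top⟩
  have hp0 : (ENNReal.ofReal r) ≠ 0 := by
    simp [ENNReal.ofReal_eq_zero, not_le, hr0]
  have hptop : (ENNReal.ofReal r) ≠ ⊤ := ENNReal.ofReal_ne_top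
  have hpr : (ENNReal.ofReal r).toReal = r := ENNReal.toReal_ofReal hr0.le
  have hg : MemLp (fun y => f y + k) (ENNReal.ofReal r) μ :=
    hf.add (memLp_const k)
  have If : Integrable (fun y => |f y| ^ r) μ := by
    simpa [Real.norm_eq_abs, hpr] using hf.integrable_norm_rpow hp0 hptop
  have Ig : Integrable (fun y => |f y + k| ^ r) μ := by
    simpa [Real.norm_eq_abs, hpr] using hg.integrable_norm_rpow hp0 hptop
  rw [intervalIntegral.integral_of_le hcd.le, intervalIntegral.integral_of_le hcd.le]
  set Sf := ∫ y, |f y| ^ r ∂μ with hSf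
  set Sg := ∫ y, |f y + k| ^ r ∂μ with hSg
  have hSf0 : 0 ≤ Sf := integral_nonneg fun y => Real.rpow_nonneg (abs_nonneg _) r
  have hSg0 : 0 ≤ Sg := integral_nonneg fun y => Real.rpow_nonneg (abs_nonneg _) r
  have hdc : (0:ℝ) < d - c := sub_pos.mpr hcd
  set t := (d - c) ^ (1 / r) with ht
  have ht0 : 0 < t := Real.rpow_pos_of_pos hdc _
  have main : Sg ^ (1 / r) ≤ Sf ^ (1 / r) + |k| * t := by
    rw [← ENNReal.ofReal_le_ofReal_iff (by positivity)]
    have hofg : ENNReal.ofReal Sg = ∫⁻ y, (ENNReal.ofReal |f y + k|) ^ r ∂μ := by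
      rw [hSg, ofReal_integral_eq_lintegral_ofReal Ig
        (Filter.Eventually.of_forall fun y => Real.rpow_nonneg (abs_nonneg _) r)]
      exact lintegral_congr fun y => (ENNReal.ofReal_rpow_of_nonneg (abs_nonneg _) hr0.le).symm
    have hoff : ENNReal.ofReal Sf = ∫⁻ y, (ENNReal.ofReal |f y|) ^ r ∂μ := by
      rw [hSf, ofReal_integral_eq_lintegral_ofReal If
        (Filter.Eventually.of_forall fun y => Real.rpow_nonneg (abs_nonneg _) r)]
      exact lintegral_congr fun y => (ENNReal.ofReal_rpow_of_nonneg (abs_nonneg _) hr0.le).symm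
    have hA : AEMeasurable (fun y => ENNReal.ofReal |f y|) μ := by
      have := hf.1.enorm
      simpa [Real.enorm_eq_ofReal_abs] using this
    have hB : AEMeasurable (fun _ : ℝ => ENNReal.ofReal |k|) μ := aemeasurable_const
    have hmono : (∫⁻ y, (ENNReal.ofReal |f y + k|) ^ r ∂μ) ^ (1 / r)
        ≤ (∫⁻ y, ((fun y => ENNReal.ofReal |f y|) y + (fun _ => ENNReal.ofReal |k|) y) ^ r ∂μ) ^ (1 / r) := by
      apply ENNReal.rpow_le_rpow _ (by positivity)
      apply lintegral_mono fun y => ?_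
      apply ENNReal.rpow_le_rpow _ hr0.le
      rw [← ENNReal.ofReal_add (abs_nonneg _) (abs_nonneg _)]
      exact ENNReal.ofReal_le_ofReal (abs_add_le _ _)
    have hmk := ENNReal.lintegral_Lp_add_le hA hB hr
    have hconst : (∫⁻ _, (ENNReal.ofReal |k|) ^ r ∂μ) ^ (1 / r)
        = ENNReal.ofReal |k| * ENNReal.ofReal (d - c) ^ (1 / r) := by
      rw [lintegral_const, hμ, Measure.restrict_apply_univ, Real.volume_Ioc,
        ENNReal.mul_rpow_of_nonneg _ _ (by positivity), ← ENNReal.rpow_mul,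
        mul_one_div, div_self hr0.ne', ENNReal.rpow_one]
    have final : ENNReal.ofReal Sg ^ (1/r) ≤ ENNReal.ofReal Sf ^ (1/r)
        + ENNReal.ofReal |k| * ENNReal.ofReal (d - c) ^ (1 / r) := by
      rw [hofg, hoff]
      calc _ ≤ _ := hmono
        _ ≤ _ := hmk
        _ = _ := by rw [hconst]
    calc ENNReal.ofReal (Sg ^ (1/r)) = ENNReal.ofReal Sg ^ (1/r) :=
          (ENNReal.ofReal_rpow_of_nonneg hSg0 (by positivity)).symm
      _ ≤ ENNReal.ofReal Sf ^ (1/r) + ENNReal.ofReal |k| * ENNReal.ofReal (d-c) ^ (1/r) := final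
      _ = ENNReal.ofReal (Sf ^ (1/r) + |k| * t) := by
          rw [ENNReal.ofReal_add (by positivity) (by positivity),
            ← ENNReal.ofReal_rpow_of_nonneg hSf0 (by positivity),
            ENNReal.ofReal_mul (abs_nonneg _),
            ← ENNReal.ofReal_rpow_of_nonneg hdc.le (by positivity)]
  have hrw : ∀ S : ℝ, 0 ≤ S → ((d - c)⁻¹ * S) ^ (1/r) = t⁻¹ * S ^ (1/r) := by
    intro S hS
    rw [Real.mul_rpow (by positivity) hS, ← Real.inv_rpow hdc.le]
  rw [hrw Sg hSg0, hrw Sf hSf0]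
  calc t⁻¹ * Sg ^ (1/r) ≤ t⁻¹ * (Sf ^ (1/r) + |k| * t) :=
        mul_le_mul_of_nonneg_left main (by positivity)
    _ = t⁻¹ * Sf ^ (1/r) + |k| := by field_simp

/-- Pick a tag in `T` inside the interval, close to `x`. -/
lemma pick {T : Set ℝ} {c d x δ : ℝ} (hcd : c < d) (hx : x ∈ Set.Icc c d)
    (hδ : 0 < δ)
    (hxcl : ∀ ε > (0:ℝ), ((closure T) ∩ Set.Ioo (x - ε) x).Nonempty ∧
      ((closure T) ∩ Set.Ioo x (x + ε)).Nonempty) :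
    ∃ t, t ∈ T ∧ t ∈ Set.Icc c d ∧ |t - x| < δ := by
  rcases lt_or_eq_of_le hx.2 with hxd | hxd
  · set ε := min δ (d - x) with hε
    have hε0 : 0 < ε := lt_min hδ (sub_pos.mpr hxd)
    obtain ⟨-, z, hzcl, hz⟩ := hxcl ε hε0
    obtain ⟨t, htIoo, htT⟩ := mem_closure_iff.mp hzcl _ isOpen_Ioo hz
    refine ⟨t, htT, ⟨le_trans hx.1 htIoo.1.le, ?_⟩, ?_⟩
    · have : t < x + (d - x) := lt_of_lt_of_le htIoo.2
        (add_le_add_right (min_le_right _ _) x)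
      linarith
    · have h1 : t - x < δ := by
        have := min_le_left δ (d - x)
        linarith [htIoo.2]
      have h2 : -δ < t - x := by linarith [htIoo.1]
      rw [abs_lt]; exact ⟨h2, h1⟩
  · have hcx : c < x := hxd ▸ hcd
    set ε := min δ (x - c) with hε
    have hε0 : 0 < ε := lt_min hδ (sub_pos.mpr hcx)
    obtain ⟨⟨z, hzcl, hz⟩, -⟩ := hxcl ε hε0
    obtain ⟨t, htIoo, htT⟩ := mem_closure_iff.mp hzcl _ isOpen_Ioo hz
    refine ⟨t, htT, ⟨?_, le_trans htIoo.2.le (le_of_eq hxd)⟩, ?_⟩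
    · have : x - (x - c) ≤ x - ε := by
        have := min_le_right δ (x - c); linarith
      linarith [htIoo.1]
    · have h1 : t - x < δ := by linarith [htIoo.2]
      have h2 : -δ < t - x := by
        have := min_le_left δ (x - c); linarith [htIoo.1]
      rw [abs_lt]; exact ⟨h2, h1⟩

theorem retag_partition_estimate {r a b γ η : ℝ} (hr : 1 ≤ r) (hγ : 0 < γ)
    (hη : 0 < η) (W T E : Set ℝ) (F : ℝ → ℝ)
    (hW : W ⊆ Set.Icc a b) (hT : T ⊆ Set.Icc a b)
    (hWT : W ⊆ closure T)
    (h2side : ∀ w ∈ W, ∀ ε > (0 : ℝ),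
      ((closure T) ∩ Set.Ioo (w - ε) w).Nonempty ∧
      ((closure T) ∩ Set.Ioo w (w + ε)).Nonempty)
    (hE : W ∪ T ⊆ E) (hcont : ContinuousOn F E)
    (hF : MemLp F (ENNReal.ofReal r) (volume.restrict (Set.Icc a b)))
    (hTpart : ∀ (n : ℕ) (c d x : Fin n → ℝ), IsTaggedPart n c d x a b →
      (∀ i, x i ∈ T) →
      (∀ i, Set.Icc (c i) (d i) ⊆ Set.Ioo (x i - γ) (x i + γ)) →
      (∑ i, (d i - c i)) < η →
      (∑ i, ((d i - c i)⁻¹ * ∫ y in (c i)..(d i), |F y - F (x i)| ^ r) ^ (1 / r)) < 1) :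
    ∀ (n : ℕ) (c d x : Fin n → ℝ), IsTaggedPart n c d x a b →
      (∀ i, x i ∈ W) →
      (∀ i, Set.Icc (c i) (d i) ⊆ Set.Ioo (x i - γ) (x i + γ)) →
      (∑ i, (d i - c i)) < η →
      (∑ i, ((d i - c i)⁻¹ * ∫ y in (c i)..(d i), |F y - F (x i)| ^ r) ^ (1 / r)) < 2 := by
  intro n c d x hpart hxW hfine hlen
  obtain ⟨hcd, hx, hsub, hdisj⟩ := hpart
  -- continuity moduli
  have hcont' := Metric.continuousOn_iff.mp hcont
  have hδ1 : ∀ i : Fin n, ∃ δ1 > (0:ℝ), ∀ z ∈ E, dist z (x i) < δ1 →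
      dist (F z) (F (x i)) < 1 / ((n:ℝ) + 1) :=
    fun i => hcont' (x i) (hE (Or.inl (hxW i))) (1 / ((n:ℝ) + 1)) (by positivity)
  choose δ1 hδ1pos hδ1 using hδ1
  have hfine' : ∀ i, x i - γ < c i ∧ d i < x i + γ := fun i =>
    ⟨(hfine i (left_mem_Icc.mpr (hcd i).le)).1,
     (hfine i (right_mem_Icc.mpr (hcd i).le)).2⟩
  set δ : Fin n → ℝ := fun i => min (δ1 i) (min ((x i + γ) - d i) ((c i + γ) - x i)) with hδdef
  have hδpos : ∀ i, 0 < δ i := fun i => lt_min (hδ1pos i)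
    (lt_min (by linarith [(hfine' i).2]) (by linarith [(hfine' i).1]))
  choose t htT htIcc htδ using fun i => pick (hcd i) (hx i) (hδpos i) (h2side (x i) (hxW i))
  have hpart' : IsTaggedPart n c d t a b := ⟨hcd, htIcc, hsub, hdisj⟩
  have hfine2 : ∀ i, Set.Icc (c i) (d i) ⊆ Set.Ioo (t i - γ) (t i + γ) := by
    intro i y hy
    have habs := abs_lt.mp (htδ i)
    constructor
    · have hle : δ i ≤ (c i + γ) - x i := le_trans (min_le_right _ _) (min_le_right _ _)
      have := hy.1; linarith [habs.2]
    · have hle : δ i ≤ (x i + γ) - d i := le_trans (min_le_right _ _) (min_le_left _ _)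
      have := hy.2; linarith [habs.1]
  have hsum1 := hTpart n c d t hpart' htT hfine2 hlen
  have hdiff : ∀ i, |F (t i) - F (x i)| < 1 / ((n:ℝ) + 1) := by
    intro i
    have := hδ1 i (t i) (hE (Or.inr (htT i)))
      (by rw [Real.dist_eq]; exact lt_of_lt_of_le (htδ i) (min_le_left _ _))
    simpa [Real.dist_eq] using this
  have hterm : ∀ i, ((d i - c i)⁻¹ * ∫ y in (c i)..(d i), |F y - F (x i)| ^ r) ^ (1 / r)
      ≤ ((d i - c i)⁻¹ * ∫ y in (c i)..(d i), |F y - F (t i)| ^ r) ^ (1 / r)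
        + |F (t i) - F (x i)| := by
    intro i
    have hsubI : Set.Ioc (c i) (d i) ⊆ Set.Icc a b :=
      Set.Ioc_subset_Icc_self.trans (hsub i)
    have hFmem : MemLp F (ENNReal.ofReal r) (volume.restrict (Set.Ioc (c i) (d i))) :=
      hF.mono_measure (Measure.restrict_mono hsubI le_rfl)
    haveI : IsFiniteMeasure (volume.restrict (Set.Ioc (c i) (d i))) :=
      ⟨by rw [Measure.restrict_apply_univ]; exact measure_Ioc_lt_top⟩
    have hfm : MemLp (fun y => F y - F (t i)) (ENNReal.ofReal r)
        (volume.restrict (Set.Ioc (c i) (d i))) := hFmem.sub (memLp_const _)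
    have := mink hr (hcd i) hfm (F (t i) - F (x i))
    simpa [sub_add_sub_cancel] using this
  calc (∑ i, ((d i - c i)⁻¹ * ∫ y in (c i)..(d i), |F y - F (x i)| ^ r) ^ (1 / r))
      ≤ ∑ i, (((d i - c i)⁻¹ * ∫ y in (c i)..(d i), |F y - F (t i)| ^ r) ^ (1 / r)
          + |F (t i) - F (x i)|) := Finset.sum_le_sum fun i _ => hterm i
    _ = (∑ i, ((d i - c i)⁻¹ * ∫ y in (c i)..(d i), |F y - F (t i)| ^ r) ^ (1 / r))
          + ∑ i, |F (t i) - F (x i)| := Finset.sum_add_distrib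
    _ < 1 + 1 := by
        apply add_lt_add hsum1
        calc ∑ i, |F (t i) - F (x i)| ≤ ∑ _i : Fin n, 1 / ((n:ℝ) + 1) :=
              Finset.sum_le_sum fun i _ => (hdiff i).le
          _ = (n:ℝ) * (1 / ((n:ℝ) + 1)) := by
              simp [Finset.sum_const, Finset.card_univ, nsmul_eq_mul]
          _ < 1 := by
              rw [mul_one_div, div_lt_one (by positivity)]
              exact lt_add_one _
    _ = 2 := by norm_num
end
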